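/- Let ω > 0, 0 < γ < sqrt(ω), and v_h(x) = sqrt(2ω) sech(sqrt(ω)x - arctanh(γ/sqrt(ω))) for x ∈ [0,∞). Then v_h solves -v'' + ωv - v³ = 0 on (0,∞) with the Robin boundary condition v_h'(0) = γ v_h(0), and consequently ω‖v_h‖²_{L²(0,∞)} + ‖v_h'‖²_{L²(0,∞)} - ‖v_h‖⁴_{L⁴(0,∞)} + γ|v_h(0)|² = 0. -/

import Mathlib

open MeasureTheory

/-- The inverse hyperbolic tangent, `arctanh x = (1/2) log ((1+x)/(1-x))`. -/
noncomputable def arctanh (x : ℝ) : ℝ := Real.log ((1 + x) / (1 - x)) / 2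

open Filter Topology in
lemma my_tendsto_tanh :
    Filter.Tendsto (fun y : ℝ => Real.sinh y / Real.cosh y) atTop (𝓝 1) := by
  have hs : Tendsto (fun y : ℝ => Real.exp (-(2 * y))) atTop (𝓝 0) := by
    have := Real.tendsto_exp_neg_atTop_nhds_zero.comp
      (tendsto_id.const_mul_atTop (by norm_num : (0:ℝ) < 2))
    exact this
  have h1 : Tendsto (fun y : ℝ => 1 - Real.exp (-(2 * y))) atTop (𝓝 (1 - 0)) :=
    tendsto_const_nhds.sub hs
  have h2 : Tendsto (fun y : ℝ => 1 + Real.exp (-(2 * y))) atTop (𝓝 (1 + 0)) :=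
    tendsto_const_nhds.add hs
  have h : Tendsto (fun y : ℝ => (1 - Real.exp (-(2 * y))) / (1 + Real.exp (-(2 * y))))
      atTop (𝓝 1) := by
    have := h1.div h2 (by norm_num)
    simpa [Pi.div_def] using this
  refine h.congr fun y => ?_
  have h1' : Real.exp (-(2 * y)) = Real.exp (-y) * Real.exp (-y) := by
    rw [← Real.exp_add]; ring_nf
  have h2' : Real.exp (-y) = (Real.exp y)⁻¹ := Real.exp_neg y
  have h3 : Real.exp y ≠ 0 := (Real.exp_pos y).ne'
  have h4 : (0:ℝ) < 1 + Real.exp (-(2 * y)) := by positivity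
  rw [Real.sinh_eq, Real.cosh_eq, h1', h2']
  have h5 : Real.exp y + (Real.exp y)⁻¹ ≠ 0 := by positivity
  field_simp

theorem stmt_13 (ω γ : ℝ) (hω : 0 < ω) (hγ : 0 < γ) (hγω : γ < Real.sqrt ω)
    (v : ℝ → ℝ)
    (hv : v = fun x : ℝ =>
      Real.sqrt (2 * ω) / Real.cosh (Real.sqrt ω * x - arctanh (γ / Real.sqrt ω))) :
    (∀ x ∈ Set.Ioi (0 : ℝ), deriv (deriv v) x = ω * v x - v x ^ 3) ∧
    deriv v 0 = γ * v 0 ∧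
    ω * (∫ x in Set.Ioi (0 : ℝ), v x ^ 2) + (∫ x in Set.Ioi (0 : ℝ), deriv v x ^ 2)
      - (∫ x in Set.Ioi (0 : ℝ), v x ^ 4) + γ * |v 0| ^ 2 = 0 := by
  set s := Real.sqrt ω with hsdef
  have hs0 : 0 < s := Real.sqrt_pos.mpr hω
  have hs2 : s ^ 2 = ω := Real.sq_sqrt hω.le
  set c := Real.sqrt (2 * ω) with hcdef
  have hc0 : 0 < c := Real.sqrt_pos.mpr (by linarith)
  have hc2 : c ^ 2 = 2 * ω := Real.sq_sqrt (by linarith)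
  set t := γ / s with htdef
  have ht0 : 0 < t := div_pos hγ hs0
  have ht1 : t < 1 := (div_lt_one hs0).mpr hγω
  have hγt : γ = t * s := by rw [htdef, div_mul_cancel₀ _ hs0.ne']
  set a := arctanh t with hadef
  -- tanh a = t
  have htanh : Real.sinh a / Real.cosh a = t := by
    have hr : (0:ℝ) < (1 + t) / (1 - t) := by
      apply div_pos <;> linarith
    have he : Real.exp a * Real.exp a = (1 + t) / (1 - t) := by
      rw [hadef, arctanh, ← Real.exp_add]
      have : Real.log ((1 + t) / (1 - t)) / 2 + Real.log ((1 + t) / (1 - t)) / 2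
          = Real.log ((1 + t) / (1 - t)) := by ring
      rw [this, Real.exp_log hr]
    have hea : Real.exp a ≠ 0 := (Real.exp_pos a).ne'
    have ht1' : (1:ℝ) - t ≠ 0 := by linarith
    have he' : Real.exp a * Real.exp a * (1 - t) = 1 + t := by
      rw [he]; field_simp
    rw [Real.sinh_eq, Real.cosh_eq, Real.exp_neg]
    have hden : Real.exp a + (Real.exp a)⁻¹ ≠ 0 := by positivity
    field_simp
    linear_combination he'
  clear_value s c t a
  clear hsdef hcdef htdef hadef
  set u : ℝ → ℝ := fun x => s * x - a with hudef
  have hcosh : ∀ y : ℝ, (0:ℝ) < Real.cosh y := Real.cosh_pos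
  have hu : ∀ x : ℝ, HasDerivAt u s x := by
    intro x
    rw [hudef]
    simpa using ((hasDerivAt_id x).const_mul s).sub_const a
  have hcu : ∀ x : ℝ, HasDerivAt (fun x => Real.cosh (u x)) (Real.sinh (u x) * s) x :=
    fun x => (Real.hasDerivAt_cosh (u x)).comp x (hu x)
  have hsu : ∀ x : ℝ, HasDerivAt (fun x => Real.sinh (u x)) (Real.cosh (u x) * s) x :=
    fun x => (Real.hasDerivAt_sinh (u x)).comp x (hu x)
  -- first derivative
  set v' : ℝ → ℝ := fun x => -(c * s) * Real.sinh (u x) / Real.cosh (u x) ^ 2 with hv'def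
  have hdv : ∀ x : ℝ, HasDerivAt v (v' x) x := by
    intro x
    rw [hv]
    have := (hasDerivAt_const x c).div (hcu x) (hcosh (u x)).ne'
    refine this.congr_deriv ?_
    symm
    rw [hv'def]
    simp only [hudef]
    have h1 : Real.cosh (s * x - a) ≠ 0 := (hcosh _).ne'
    field_simp
    ring
  have hderiv_v : deriv v = v' := funext fun x => (hdv x).deriv
  -- second derivative
  set v'' : ℝ → ℝ := fun x =>
    -(c * ω) * (Real.cosh (u x) ^ 2 - 2 * Real.sinh (u x) ^ 2) / Real.cosh (u x) ^ 3
    with hv''def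
  have hdv' : ∀ x : ℝ, HasDerivAt v' (v'' x) x := by
    intro x
    have hnum : HasDerivAt (fun x => -(c * s) * Real.sinh (u x))
        (-(c * s) * (Real.cosh (u x) * s)) x := (hsu x).const_mul _
    have hden : HasDerivAt (fun x => Real.cosh (u x) ^ 2)
        ((2 : ℕ) * Real.cosh (u x) ^ 1 * (Real.sinh (u x) * s)) x := (hcu x).pow 2
    have := hnum.div hden (by positivity)
    refine this.congr_deriv ?_
    symm
    rw [hv''def]
    have h1 : Real.cosh (u x) ≠ 0 := (hcosh (u x)).ne'
    field_simp
    linear_combination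
      (Real.cosh (u x) ^ 2 - 2 * Real.sinh (u x) ^ 2) * hs2
  have hderiv_v' : deriv v' = v'' := funext fun x => (hdv' x).deriv
  refine ⟨?_, ?_, ?_⟩
  · -- ODE
    intro x _
    rw [hderiv_v, hderiv_v', hv]
    simp only [hv''def, hudef]
    have h1 : Real.cosh (s * x - a) ≠ 0 := (hcosh _).ne'
    have hsq := Real.cosh_sq_sub_sinh_sq (s * x - a)
    field_simp
    linear_combination (-2 * ω) * hsq + hc2
  · -- boundary condition
    rw [hderiv_v, hv]
    simp only [hv'def]
    have hu0 : u 0 = -a := by simp [hudef]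
    rw [hu0]
    have hca : Real.cosh a ≠ 0 := (hcosh a).ne'
    have hsa : Real.sinh a = t * Real.cosh a := by
      field_simp at htanh; linarith [htanh]
    rw [Real.sinh_neg, Real.cosh_neg, hsa, hγt]
    field_simp
    rw [mul_zero, zero_sub, Real.cosh_neg]
  · -- energy identity
    have hca : Real.cosh a ≠ 0 := (hcosh a).ne'
    have hsa : Real.sinh a = t * Real.cosh a := by
      field_simp at htanh; linarith [htanh]
    have hcainv : Real.cosh a ^ 2 * (1 - t ^ 2) = 1 := by
      have hsq := Real.cosh_sq_sub_sinh_sq a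
      linear_combination hsq + (Real.sinh a + t * Real.cosh a) * hsa
    have huT : Filter.Tendsto u Filter.atTop Filter.atTop := by
      rw [hudef]
      apply Filter.tendsto_atTop_add_const_right
      exact Filter.tendsto_id.const_mul_atTop hs0
    have hT : Filter.Tendsto (fun x => Real.sinh (u x) / Real.cosh (u x)) Filter.atTop (nhds 1) :=
      my_tendsto_tanh.comp huT
    have hu0 : u 0 = -a := by simp [hudef]
    -- I1 : ∫ v^2
    have hI1 : (∫ x in Set.Ioi (0:ℝ), v x ^ 2) = 2 * s * (1 + t) := by
      have hG : ∀ x : ℝ, HasDerivAt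
          (fun x => 2 * s * (Real.sinh (u x) / Real.cosh (u x))) (v x ^ 2) x := by
        intro x
        have := ((hsu x).div (hcu x) (hcosh (u x)).ne').const_mul (2 * s)
        refine this.congr_deriv ?_
        symm
        rw [hv]
        simp only [hudef]
        have h1 : Real.cosh (s * x - a) ≠ 0 := (hcosh _).ne'
        have hsq := Real.cosh_sq_sub_sinh_sq (s * x - a)
        rw [div_pow, hc2]
        field_simp
        linear_combination (-s ^ 2) * hsq + (-1) * hs2
      have hlim : Filter.Tendsto (fun x => 2 * s * (Real.sinh (u x) / Real.cosh (u x)))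
          Filter.atTop (nhds (2 * s * 1)) := hT.const_mul _
      have := integral_Ioi_of_hasDerivAt_of_nonneg
        (hG 0).continuousAt.continuousWithinAt
        (fun x _ => hG x) (fun x _ => by positivity) hlim
      rw [this, hu0, Real.sinh_neg, Real.cosh_neg, hsa]
      field_simp
      ring
    -- I2 : ∫ v'^2
    have hI2 : (∫ x in Set.Ioi (0:ℝ), deriv v x ^ 2) = 2 / 3 * s * ω * (1 + t ^ 3) := by
      rw [hderiv_v]
      have hG : ∀ x : ℝ, HasDerivAt
          (fun x => 2 / 3 * s * ω * (Real.sinh (u x) / Real.cosh (u x)) ^ 3)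
          (v' x ^ 2) x := by
        intro x
        have hT' := (hsu x).div (hcu x) (hcosh (u x)).ne'
        have := (hT'.pow 3).const_mul (2 / 3 * s * ω)
        refine this.congr_deriv ?_
        symm
        simp only [hv'def, Pi.div_apply]
        have h1 : Real.cosh (u x) ≠ 0 := (hcosh (u x)).ne'
        have hsq := Real.cosh_sq_sub_sinh_sq (u x)
        rw [show (3:ℕ) - 1 = 2 from rfl, div_pow]
        field_simp
        linear_combination (3 * Real.sinh (u x) ^ 2) * hc2
          + (-(6 * ω * Real.sinh (u x) ^ 2)) * hsq
      have hlim : Filter.Tendsto (fun x => 2 / 3 * s * ω * (Real.sinh (u x) / Real.cosh (u x)) ^ 3)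
          Filter.atTop (nhds (2 / 3 * s * ω * 1 ^ 3)) := (hT.pow 3).const_mul _
      have := integral_Ioi_of_hasDerivAt_of_nonneg
        (hG 0).continuousAt.continuousWithinAt
        (fun x _ => hG x) (fun x _ => by positivity) hlim
      rw [this, hu0, Real.sinh_neg, Real.cosh_neg, hsa]
      field_simp
      ring
    -- I3 : ∫ v^4
    have hI3 : (∫ x in Set.Ioi (0:ℝ), v x ^ 4)
        = 4 * s * ω * (2 / 3 + t - t ^ 3 / 3) := by
      have hc4 : c ^ 4 = 4 * ω ^ 2 := by nlinarith [hc2]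
      have hG : ∀ x : ℝ, HasDerivAt
          (fun x => 4 * s * ω * ((Real.sinh (u x) / Real.cosh (u x))
            - (Real.sinh (u x) / Real.cosh (u x)) ^ 3 / 3))
          (v x ^ 4) x := by
        intro x
        have hT' := (hsu x).div (hcu x) (hcosh (u x)).ne'
        have := (hT'.sub ((hT'.pow 3).div_const 3)).const_mul (4 * s * ω)
        refine this.congr_deriv ?_
        symm
        rw [hv]
        simp only [hudef, Pi.div_apply]
        have h1 : Real.cosh (s * x - a) ≠ 0 := (hcosh _).ne'
        have hsq := Real.cosh_sq_sub_sinh_sq (s * x - a)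
        rw [div_pow, show (3:ℕ) - 1 = 2 from rfl, div_pow]
        field_simp
        linear_combination 3 * hc4
          + (-12 * ω) * hs2
          + (-12 * s ^ 2 * ω *
              (Real.cosh (s * x - a) ^ 2 - Real.sinh (s * x - a) ^ 2 + 1)) * hsq
      have hlim : Filter.Tendsto (fun x => 4 * s * ω * ((Real.sinh (u x) / Real.cosh (u x))
            - (Real.sinh (u x) / Real.cosh (u x)) ^ 3 / 3))
          Filter.atTop (nhds (4 * s * ω * (1 - 1 ^ 3 / 3))) :=
        (hT.sub ((hT.pow 3).div_const 3)).const_mul _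
      have := integral_Ioi_of_hasDerivAt_of_nonneg
        (hG 0).continuousAt.continuousWithinAt
        (fun x _ => hG x) (fun x _ => by positivity) hlim
      rw [this, hu0, Real.sinh_neg, Real.cosh_neg, hsa]
      field_simp
      ring
    have hv0pos : 0 < v 0 := by
      rw [hv]; exact div_pos hc0 (hcosh _)
    have hv0 : v 0 ^ 2 = 2 * ω * (1 - t ^ 2) := by
      rw [hv]
      have h0 : s * 0 - a = -a := by ring
      show (c / Real.cosh (s * 0 - a)) ^ 2 = 2 * ω * (1 - t ^ 2)
      rw [h0, Real.cosh_neg, div_pow, hc2]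
      rw [div_eq_iff (by positivity)]
      linear_combination (-2 * ω) * hcainv
    rw [hI1, hI2, hI3, abs_of_pos hv0pos, hv0, hγt]
    ring
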